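/- Let φ : E → ℝ ∪ {+∞} be proper, convex and lower semicontinuous, and let ν, β, γ > 0. Let ^νφ(x) := inf_{y ∈ E} (φ(y) + (1/(2ν))‖y − x‖²) denote the Moreau envelope of φ with parameter ν, and for λ > 0 let prox_{λφ}(x) denote the unique minimizer over E of y ↦ φ(y) + (1/(2λ))‖y − x‖². Define f := ^νφ + (β/2)‖·‖² and κ := 1/(γβ + 1). Then f is real-valued, and for every x ∈ E the unique minimizer over E of y ↦ f(y) + (1/(2γ))‖y − x‖² equals κ·x + (γκ/(γκ + ν))·(prox_{(γκ + ν)φ}(κx) − κx). -/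
import Mathlib

open scoped RealInnerProductSpace

lemma nexos_key_id {E : Type*} [NormedAddCommGroup E] [InnerProductSpace ℝ E]
    (ν lam : ℝ) (hν : 0 < ν) (hlam : 0 < lam) (a b : E) :
    1/(2*ν)*‖a‖^2 + 1/(2*lam)*‖b‖^2
      = 1/(2*(lam+ν))*‖a+b‖^2 + 1/(2*ν*lam*(lam+ν))*‖ν•b - lam•a‖^2 := by
  have h1 : ‖a+b‖^2 = ‖a‖^2 + 2*⟪a,b⟫ + ‖b‖^2 := norm_add_sq_real a b
  have h2 : ‖ν•b - lam•a‖^2 = ν^2*‖b‖^2 - 2*(ν*lam*⟪a,b⟫) + lam^2*‖a‖^2 := by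
    rw [norm_sub_sq_real, norm_smul, norm_smul, real_inner_smul_left, real_inner_smul_right,
      real_inner_comm]
    simp [abs_of_pos hν, abs_of_pos hlam, mul_pow]
    ring
  rw [h1, h2]
  have hμ : lam + ν ≠ 0 := by positivity
  field_simp
  ring

lemma nexos_quad_id {E : Type*} [NormedAddCommGroup E] [InnerProductSpace ℝ E]
    (β γ κ lam : ℝ) (hβ : 0 < β) (hγ : 0 < γ) (hκ : κ = 1/(γ*β+1)) (hlam : lam = γ*κ)
    (x y : E) :
    β/2*‖y‖^2 + 1/(2*γ)*‖y-x‖^2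
      = 1/(2*lam)*‖y - κ•x‖^2 + (1/(2*γ)*‖x‖^2 - 1/(2*lam)*‖κ•x‖^2) := by
  have hd : γ*β+1 ≠ 0 := by positivity
  have hκpos : 0 < κ := by rw [hκ]; positivity
  have h1 : ‖y-x‖^2 = ‖y‖^2 - 2*⟪y,x⟫ + ‖x‖^2 := norm_sub_sq_real y x
  have h2 : ‖y - κ•x‖^2 = ‖y‖^2 - 2*(κ*⟪y,x⟫) + κ^2*‖x‖^2 := by
    rw [norm_sub_sq_real, real_inner_smul_right, norm_smul]
    simp [abs_of_pos hκpos, mul_pow]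
  have h3 : ‖κ•x‖^2 = κ^2*‖x‖^2 := by
    rw [norm_smul]
    simp [abs_of_pos hκpos, mul_pow]
  rw [h1, h2, h3, hlam, hκ]
  field_simp
  ring

/-- The Moreau envelope (with parameter `ν`) of an extended-real-valued
function `φ`. -/
noncomputable def moreauEnv {E : Type*} [NormedAddCommGroup E] [InnerProductSpace ℝ E]
    (φ : E → EReal) (ν : ℝ) (x : E) : EReal :=
  ⨅ y : E, φ y + ((1 / (2 * ν) * ‖y - x‖ ^ 2 : ℝ) : EReal)

/-- For a proper, convex, lower semicontinuous
`φ : E → ℝ ∪ {+∞}` and `ν, β, γ > 0`, the function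
`f := ^νφ + (β/2)‖·‖²` is real-valued, and with `κ := 1/(γβ+1)` the proximal
operator of `f` (with parameter `γ`) is given by
`prox_{γf}(x) = κx + (γκ/(γκ+ν))(prox_{(γκ+ν)φ}(κx) − κx)`. -/
theorem nexos_prox_of_smoothed_nonsmooth_cost
    {E : Type*} [NormedAddCommGroup E] [InnerProductSpace ℝ E] [FiniteDimensional ℝ E]
    (φ : E → EReal)
    -- `φ` is proper (never `−∞`, not identically `+∞`)
    (hproper : (∃ x, φ x ≠ ⊤) ∧ ∀ x, φ x ≠ ⊥)
    -- `φ` is convex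
    (hconv : ∀ x y : E, ∀ a b : ℝ, 0 ≤ a → 0 ≤ b → a + b = 1 →
      φ (a • x + b • y) ≤ (a : EReal) * φ x + (b : EReal) * φ y)
    -- `φ` is lower semicontinuous
    (hlsc : LowerSemicontinuous φ)
    (ν β γ : ℝ) (hν : 0 < ν) (hβ : 0 < β) (hγ : 0 < γ)
    -- `prox lam x` is the unique minimizer over `E` of `y ↦ φ(y) + (1/(2 lam))‖y − x‖²`
    (prox : ℝ → E → E)
    (hprox : ∀ lam : ℝ, 0 < lam → ∀ x : E,
      (∀ y : E, φ (prox lam x) + ((1 / (2 * lam) * ‖prox lam x - x‖ ^ 2 : ℝ) : EReal)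
        ≤ φ y + ((1 / (2 * lam) * ‖y - x‖ ^ 2 : ℝ) : EReal)) ∧
      (∀ y : E, (∀ w : E, φ y + ((1 / (2 * lam) * ‖y - x‖ ^ 2 : ℝ) : EReal)
        ≤ φ w + ((1 / (2 * lam) * ‖w - x‖ ^ 2 : ℝ) : EReal)) → y = prox lam x)) :
    -- `f = ^νφ + (β/2)‖·‖²` is real-valued …
    (∀ x : E, moreauEnv φ ν x ≠ ⊤ ∧ moreauEnv φ ν x ≠ ⊥) ∧
    -- … and for every `x`, the unique minimizer of `y ↦ f(y) + (1/(2γ))‖y − x‖²`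
    -- equals `κx + (γκ/(γκ+ν))(prox_{(γκ+ν)φ}(κx) − κx)` with `κ = 1/(γβ+1)`
    (∀ x : E,
      IsMinOn
        (fun y => (moreauEnv φ ν y).toReal + β / 2 * ‖y‖ ^ 2 + 1 / (2 * γ) * ‖y - x‖ ^ 2)
        Set.univ
        ((1 / (γ * β + 1)) • x + (γ * (1 / (γ * β + 1)) / (γ * (1 / (γ * β + 1)) + ν)) •
          (prox (γ * (1 / (γ * β + 1)) + ν) ((1 / (γ * β + 1)) • x)
            - (1 / (γ * β + 1)) • x)) ∧
      (∀ y : E,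
        IsMinOn
          (fun y => (moreauEnv φ ν y).toReal + β / 2 * ‖y‖ ^ 2 + 1 / (2 * γ) * ‖y - x‖ ^ 2)
          Set.univ y →
        y = (1 / (γ * β + 1)) • x + (γ * (1 / (γ * β + 1)) / (γ * (1 / (γ * β + 1)) + ν)) •
          (prox (γ * (1 / (γ * β + 1)) + ν) ((1 / (γ * β + 1)) • x)
            - (1 / (γ * β + 1)) • x))) := by
  obtain ⟨⟨x₀, hx₀⟩, hbot⟩ := hproper
  -- the prox point always has finite φ-value
  have hfin : ∀ lam : ℝ, 0 < lam → ∀ x : E, ∃ r : ℝ, φ (prox lam x) = (r : EReal) := by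
    intro lam hlam x
    have hb := hbot (prox lam x)
    have ht : φ (prox lam x) ≠ ⊤ := by
      intro h
      have hle := (hprox lam hlam x).1 x₀
      rw [h, EReal.top_add_coe, top_le_iff] at hle
      have hx0' : φ x₀ = ((φ x₀).toReal : EReal) := (EReal.coe_toReal hx₀ (hbot x₀)).symm
      rw [hx0', ← EReal.coe_add] at hle
      exact EReal.coe_ne_top _ hle
    exact ⟨(φ (prox lam x)).toReal, (EReal.coe_toReal ht hb).symm⟩
  -- real version of the prox minimality
  have hmin_real : ∀ lam : ℝ, 0 < lam → ∀ x w : E, φ w ≠ ⊤ →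
      (φ (prox lam x)).toReal + 1/(2*lam)*‖prox lam x - x‖^2
        ≤ (φ w).toReal + 1/(2*lam)*‖w - x‖^2 := by
    intro lam hlam x w hw
    obtain ⟨r, hr⟩ := hfin lam hlam x
    have hw' : φ w = ((φ w).toReal : EReal) := (EReal.coe_toReal hw (hbot w)).symm
    have hle := (hprox lam hlam x).1 w
    rw [hr, hw', ← EReal.coe_add, ← EReal.coe_add, EReal.coe_le_coe_iff] at hle
    rw [hr, EReal.toReal_coe]
    exact hle
  -- the envelope value is attained at `prox ν y`
  have henv_eq : ∀ y : E,
      moreauEnv φ ν y = φ (prox ν y) + ((1/(2*ν)*‖prox ν y - y‖^2 : ℝ) : EReal) :=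
    fun y => le_antisymm (iInf_le _ (prox ν y)) (le_iInf fun w => (hprox ν hν y).1 w)
  have henvtoReal : ∀ y : E,
      (moreauEnv φ ν y).toReal = (φ (prox ν y)).toReal + 1/(2*ν)*‖prox ν y - y‖^2 := by
    intro y
    obtain ⟨r, hr⟩ := hfin ν hν y
    rw [henv_eq y, hr, ← EReal.coe_add, EReal.toReal_coe, EReal.toReal_coe]
  constructor
  · intro x
    obtain ⟨r, hr⟩ := hfin ν hν x
    rw [henv_eq x, hr, ← EReal.coe_add]
    exact ⟨EReal.coe_ne_top _, EReal.coe_ne_bot _⟩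
  intro x
  have hκpos0 : (0:ℝ) < 1/(γ*β+1) := by positivity
  set κ : ℝ := 1/(γ*β+1) with hκdef
  set lam : ℝ := γ*κ with hlamdef
  have hlampos : 0 < lam := by rw [hlamdef]; positivity
  have hμpos : 0 < lam + ν := by positivity
  set p : E := prox (lam + ν) (κ•x) with hpdef
  set q : E := κ•x + (lam/(lam+ν))•(p - κ•x) with hqdef
  obtain ⟨rp, hrp⟩ := hfin (lam+ν) hμpos (κ•x)
  -- the candidate minimum value
  set C : ℝ := 1/(2*γ)*‖x‖^2 - 1/(2*lam)*‖κ•x‖^2 with hCdef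
  set m : ℝ := (φ p).toReal + 1/(2*(lam+ν))*‖p - κ•x‖^2 + C with hmdef
  clear_value κ lam p q C m
  rw [← hpdef] at hrp
  -- pointwise decomposition of the objective
  have hF : ∀ y : E,
      (moreauEnv φ ν y).toReal + β / 2 * ‖y‖ ^ 2 + 1 / (2 * γ) * ‖y - x‖ ^ 2
        = (φ (prox ν y)).toReal + 1/(2*(lam+ν))*‖prox ν y - κ•x‖^2
          + 1/(2*ν*lam*(lam+ν))*‖ν•(y - κ•x) - lam•(prox ν y - y)‖^2 + C := by
    intro y
    have h2 := nexos_quad_id β γ κ lam hβ hγ hκdef hlamdef x y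
    have h3 := nexos_key_id ν lam hν hlampos (prox ν y - y) (y - κ•x)
    rw [sub_add_sub_cancel] at h3
    rw [henvtoReal y]
    rw [hCdef]
    linarith [h2, h3]
  -- lower bound
  have hlow : ∀ y : E,
      m ≤ (moreauEnv φ ν y).toReal + β / 2 * ‖y‖ ^ 2 + 1 / (2 * γ) * ‖y - x‖ ^ 2 := by
    intro y
    rw [hF y]
    obtain ⟨s, hs⟩ := hfin ν hν y
    have hmin := hmin_real (lam+ν) hμpos (κ•x) (prox ν y) (by rw [hs]; exact EReal.coe_ne_top _)
    rw [← hpdef] at hmin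
    have hnn : 0 ≤ 1/(2*ν*lam*(lam+ν))*‖ν•(y - κ•x) - lam•(prox ν y - y)‖^2 := by positivity
    rw [hmdef]
    linarith only [hmin, hnn]
  -- residual vanishes at the candidate point
  have hres : ν•(q - κ•x) - lam•(p - q) = (0:E) := by
    rw [hqdef]
    match_scalars <;> (field_simp; try ring)
  -- upper bound: the value at the candidate point equals m
  have hup : (moreauEnv φ ν q).toReal + β / 2 * ‖q‖ ^ 2 + 1 / (2 * γ) * ‖q - x‖ ^ 2 ≤ m := by
    have henvle : (moreauEnv φ ν q).toReal ≤ (φ p).toReal + 1/(2*ν)*‖p - q‖^2 := by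
      rw [henvtoReal q]
      exact hmin_real ν hν q p (by rw [hrp]; exact EReal.coe_ne_top _)
    have h2 := nexos_quad_id β γ κ lam hβ hγ hκdef hlamdef x q
    have h3 := nexos_key_id ν lam hν hlampos (p - q) (q - κ•x)
    rw [sub_add_sub_cancel] at h3
    have h4 : ‖ν•(q - κ•x) - lam•(p - q)‖^2 = 0 := by rw [hres]; simp
    rw [h4] at h3
    rw [hmdef, hCdef]
    linarith only [henvle, h2, h3]
  refine ⟨?_, ?_⟩
  · rw [isMinOn_iff]
    intro y _
    exact le_trans hup (hlow y)
  · intro y hy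
    have h1 := isMinOn_iff.mp hy q (Set.mem_univ q)
    have h2 : (moreauEnv φ ν y).toReal + β / 2 * ‖y‖ ^ 2 + 1 / (2 * γ) * ‖y - x‖ ^ 2 = m :=
      le_antisymm (le_trans h1 hup) (hlow y)
    rw [hF y] at h2
    rw [hmdef] at h2
    obtain ⟨s, hs⟩ := hfin ν hν y
    have hmin := hmin_real (lam+ν) hμpos (κ•x) (prox ν y) (by rw [hs]; exact EReal.coe_ne_top _)
    rw [← hpdef] at hmin
    have hnn : 0 ≤ 1/(2*ν*lam*(lam+ν))*‖ν•(y - κ•x) - lam•(prox ν y - y)‖^2 := by positivity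
    -- the residual must vanish and the φ-part must be optimal
    have hres0 : ‖ν•(y - κ•x) - lam•(prox ν y - y)‖^2 = 0 := by
      have hc : 0 < 1/(2*ν*lam*(lam+ν)) := by positivity
      have hTle : 1/(2*ν*lam*(lam+ν))*‖ν•(y - κ•x) - lam•(prox ν y - y)‖^2 ≤ 0 := by
        linarith only [h2, hmin]
      have hn : ‖ν•(y - κ•x) - lam•(prox ν y - y)‖^2 ≤ 0 :=
        le_of_mul_le_mul_left (by rw [mul_zero]; exact hTle) hc
      exact le_antisymm hn (sq_nonneg _)
    have hveq : ν•(y - κ•x) - lam•(prox ν y - y) = (0:E) :=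
      norm_eq_zero.mp (sq_eq_zero_iff.mp hres0)
    have heqφ : (φ (prox ν y)).toReal + 1/(2*(lam+ν))*‖prox ν y - κ•x‖^2
        = (φ p).toReal + 1/(2*(lam+ν))*‖p - κ•x‖^2 := by
      rw [hres0] at h2
      linarith only [h2]
    -- hence `prox ν y` is also a minimizer for parameter `lam+ν`, so equals `p`
    have hpy_min : ∀ w : E,
        φ (prox ν y) + ((1/(2*(lam+ν))*‖prox ν y - κ•x‖^2 : ℝ) : EReal)
          ≤ φ w + ((1/(2*(lam+ν))*‖w - κ•x‖^2 : ℝ) : EReal) := by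
      intro w
      have hE : φ (prox ν y) + ((1/(2*(lam+ν))*‖prox ν y - κ•x‖^2 : ℝ) : EReal)
          = φ p + ((1/(2*(lam+ν))*‖p - κ•x‖^2 : ℝ) : EReal) := by
        rw [hs, hrp, ← EReal.coe_add, ← EReal.coe_add, EReal.coe_eq_coe_iff]
        rw [hs] at heqφ
        rw [hrp] at heqφ
        simpa using heqφ
      rw [hE, hpdef]
      exact (hprox (lam+ν) hμpos (κ•x)).1 w
    have hpy : prox ν y = p := by
      have := (hprox (lam+ν) hμpos (κ•x)).2 (prox ν y) hpy_min
      rw [← hpdef] at this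
      exact this
    rw [hpy] at hveq
    -- solve the linear equation for y
    have h6 : (lam+ν)•y = lam•p + ν•(κ•x) := by
      have h7 : ν•y - ν•(κ•x) = lam•p - lam•y := by
        rw [← smul_sub, ← smul_sub]
        rw [sub_eq_zero] at hveq
        exact hveq
      calc (lam+ν)•y = lam•y + (ν•y - ν•(κ•x)) + ν•(κ•x) := by rw [add_smul]; abel
      _ = lam•y + (lam•p - lam•y) + ν•(κ•x) := by rw [h7]
      _ = lam•p + ν•(κ•x) := by abel
    have h8 : y = (lam+ν)⁻¹ • (lam•p + ν•(κ•x)) := by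
      rw [← h6, inv_smul_smul₀ hμpos.ne']
    rw [h8, hqdef]
    match_scalars <;> (field_simp; try ring)
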